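/- Rådström cancellation: let A be a nonempty subset, E a nonempty bounded subset, and B a nonempty closed convex subset of a Euclidean space such that A + E ⊆ B + E. Then A ⊆ B. -/

import Mathlib

open Pointwise

variable {X : Type*} [NormedAddCommGroup X] [InnerProductSpace ℝ X] [FiniteDimensional ℝ X]

def NearlyEqual (A B : Set X) : Prop :=
  closure A = closure B ∧ intrinsicInterior ℝ A = intrinsicInterior ℝ B

def NearlyConvex (A : Set X) : Prop :=
  ∃ C : Set X, Convex ℝ C ∧ C ⊆ A ∧ A ⊆ closure C

theorem radstrom_cancellation (A B E : Set X) (hAne : A.Nonempty)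
    (hEne : E.Nonempty) (hE : Bornology.IsBounded E)
    (hBne : B.Nonempty) (hBclosed : IsClosed B) (hBconv : Convex ℝ B)
    (h : A + E ⊆ B + E) : A ⊆ B := by
  obtain ⟨M, hM⟩ := hE.exists_norm_le
  intro a ha
  have key : ∀ e ∈ E, ∃ b ∈ B, ∃ e' ∈ E, a + e = b + e' := by
    intro e he
    obtain ⟨b, hb, e', he', heq⟩ := h (Set.add_mem_add ha he)
    exact ⟨b, hb, e', he', heq.symm⟩
  choose! bf hbf ef hef heq using key
  obtain ⟨e0, he0⟩ := hEne
  set e : ℕ → X := fun n => Nat.rec e0 (fun _ x => ef x) n with he_def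
  have heE : ∀ n, e n ∈ E := by
    intro n; induction n with
    | zero => exact he0
    | succ n ih => exact hef _ ih
  have hsum : ∀ n : ℕ, (n + 1 : ℕ) • a + e 0 =
      (∑ i ∈ Finset.range (n + 1), bf (e i)) + e (n + 1) := by
    intro n; induction n with
    | zero => have h0 : e 1 = ef (e 0) := rfl; have h00 : e 0 = e0 := rfl; simpa [h0, h00] using heq _ he0
    | succ n ih =>
      have h1 : a + e (n + 1) = bf (e (n + 1)) + ef (e (n + 1)) := heq _ (heE (n + 1))
      rw [Finset.sum_range_succ]
      have : ((n : ℕ) + 1 + 1) • a + e 0 = a + ((n + 1 : ℕ) • a + e 0) := by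
        rw [add_smul, one_smul]; abel
      rw [this, ih]
      have : e (n + 1 + 1) = ef (e (n + 1)) := rfl
      rw [this]
      rw [show (∑ i ∈ Finset.range (n + 1), bf (e i)) + bf (e (n + 1)) + ef (e (n + 1))
          = (∑ i ∈ Finset.range (n + 1), bf (e i)) + (bf (e (n + 1)) + ef (e (n + 1))) by abel,
        ← h1]
      abel
  set c : ℕ → X := fun n => (1 / (n + 1 : ℝ)) • ∑ i ∈ Finset.range (n + 1), bf (e i) with hc_def
  have hcB : ∀ n, c n ∈ B := by
    intro n
    have := hBconv.sum_mem (t := Finset.range (n + 1)) (w := fun _ => 1 / (n + 1 : ℝ))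
      (z := fun i => bf (e i)) (fun i _ => by positivity)
      (by rw [Finset.sum_const, Finset.card_range, nsmul_eq_mul]
          field_simp
          norm_num)
      (fun i _ => hbf _ (heE i))
    simpa [hc_def, Finset.smul_sum] using this
  have hformula : ∀ n, c n = a + (1 / (n + 1 : ℝ)) • (e 0 - e (n + 1)) := by
    intro n
    have hs : (∑ i ∈ Finset.range (n + 1), bf (e i)) = (n + 1 : ℕ) • a + e 0 - e (n + 1) := by
      rw [hsum n]; abel
    have hn : ((n : ℝ) + 1) ≠ 0 := by positivity
    rw [hc_def]
    simp only [hs, smul_sub, smul_add]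
    have : (1 / ((n : ℝ) + 1)) • ((n + 1 : ℕ) • a) = a := by
      rw [← Nat.cast_smul_eq_nsmul ℝ, smul_smul]
      push_cast
      rw [one_div, inv_mul_cancel₀ hn, one_smul]
    rw [this]
    abel
  have htend : Filter.Tendsto c Filter.atTop (nhds a) := by
    rw [tendsto_iff_norm_sub_tendsto_zero]
    have hbound : ∀ n : ℕ, ‖c n - a‖ ≤ (2 * M) * (1 / (n + 1 : ℝ)) := by
      intro n
      rw [hformula n]
      have : a + (1 / (n + 1 : ℝ)) • (e 0 - e (n + 1)) - a
          = (1 / (n + 1 : ℝ)) • (e 0 - e (n + 1)) := by abel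
      rw [this, norm_smul]
      have h1 : ‖e 0 - e (n + 1)‖ ≤ 2 * M := by
        calc ‖e 0 - e (n + 1)‖ ≤ ‖e 0‖ + ‖e (n + 1)‖ := norm_sub_le _ _
          _ ≤ M + M := add_le_add (hM _ (heE 0)) (hM _ (heE (n + 1)))
          _ = 2 * M := by ring
      have h2 : ‖(1 / ((n : ℝ) + 1))‖ = 1 / ((n : ℝ) + 1) := by
        rw [Real.norm_eq_abs, abs_of_pos]; positivity
      rw [h2]
      calc (1 / ((n : ℝ) + 1)) * ‖e 0 - e (n + 1)‖
          ≤ (1 / ((n : ℝ) + 1)) * (2 * M) := by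
            apply mul_le_mul_of_nonneg_left h1; positivity
        _ = (2 * M) * (1 / (n + 1 : ℝ)) := by ring
    have hlim : Filter.Tendsto (fun n : ℕ => (2 * M) * (1 / (n + 1 : ℝ)))
        Filter.atTop (nhds 0) := by
      have := tendsto_one_div_add_atTop_nhds_zero_nat.const_mul (2 * M)
      simpa using this
    exact squeeze_zero (fun n => norm_nonneg _) hbound hlim
  exact hBclosed.mem_of_tendsto htend (Filter.Eventually.of_forall hcB)
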